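/- Let G be a finite group that possesses m cyclic subgroups whose union contains all commutators of G, and let T be the intersection of the normalizers N_G(⟨x⟩) taken over all commutators x of G. Then the commutator subgroup T' centralizes G'; in particular, T is metabelian. -/

import Mathlib

open scoped commutatorElement

/-- If `s` and `t` both normalize the cyclic subgroup generated by `z`, then `⁅s,t⁆`
commutes with `z`. -/
lemma commutator_commutes_of_mem_normalizer {G : Type} [Group G] {s t z : G}
    (hs : s ∈ Subgroup.normalizer ((Subgroup.closure {z} : Subgroup G) : Set G))
    (ht : t ∈ Subgroup.normalizer ((Subgroup.closure {z} : Subgroup G) : Set G)) :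
    z * ⁅s, t⁆ = ⁅s, t⁆ * z := by
  rw [← Subgroup.zpowers_eq_closure] at hs ht
  have hs' : s⁻¹ * z * s ∈ Subgroup.zpowers z :=
    (Subgroup.mem_normalizer_iff''.mp hs z).mp (Subgroup.mem_zpowers z)
  have ht' : t⁻¹ * z * t ∈ Subgroup.zpowers z :=
    (Subgroup.mem_normalizer_iff''.mp ht z).mp (Subgroup.mem_zpowers z)
  obtain ⟨k, hk⟩ := hs'
  obtain ⟨l, hl⟩ := ht'
  simp only at hk hl
  have h3 : t⁻¹ * z ^ k * t = (t⁻¹ * z * t) ^ k := by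
    have := conj_zpow (i := k) (a := t⁻¹) (b := z); simpa using this.symm
  have h4 : s⁻¹ * z ^ l * s = (s⁻¹ * z * s) ^ l := by
    have := conj_zpow (i := l) (a := s⁻¹) (b := z); simpa using this.symm
  have e2 : (s * t)⁻¹ * z * (s * t) = (t * s)⁻¹ * z * (t * s) := by
    have h1 : (s * t)⁻¹ * z * (s * t) = t⁻¹ * (s⁻¹ * z * s) * t := by group
    have h2 : (t * s)⁻¹ * z * (t * s) = s⁻¹ * (t⁻¹ * z * t) * s := by group
    rw [h1, h2, ← hk, ← hl, h3, h4, ← hk, ← hl, ← zpow_mul, ← zpow_mul, mul_comm]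
  have e3 : ⁅s, t⁆ * z * ⁅s, t⁆⁻¹ = z := by
    rw [commutatorElement_def]
    calc s * t * s⁻¹ * t⁻¹ * z * (s * t * s⁻¹ * t⁻¹)⁻¹
        = (s * t) * ((t * s)⁻¹ * z * (t * s)) * (s * t)⁻¹ := by group
      _ = (s * t) * ((s * t)⁻¹ * z * (s * t)) * (s * t)⁻¹ := by rw [e2]
      _ = z := by group
  calc z * ⁅s, t⁆ = (⁅s, t⁆ * z * ⁅s, t⁆⁻¹) * ⁅s, t⁆ := by rw [e3]
    _ = ⁅s, t⁆ * z := by group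

/-- Let `G` be a finite group possessing `m` cyclic subgroups whose union contains all
commutators of `G`, and let `T` be the intersection of the normalizers `N_G(⟨z⟩)` over all
commutators `z` of `G`. Then `T' = [T,T]` centralizes `G'`; in particular `T` is metabelian
(`[T,T]` is abelian). -/
theorem intersection_of_normalizers_metabelian
    (m : ℕ) (G : Type) [Group G] [Finite G]
    (hcov : ∃ C : Fin m → Subgroup G, (∀ i, IsCyclic ↥(C i)) ∧
      ∀ x y : G, ⁅x, y⁆ ∈ ⋃ i, ((C i : Subgroup G) : Set G))
    (T : Subgroup G)
    (hT : T = ⨅ z ∈ {g : G | ∃ x y : G, g = ⁅x, y⁆}, Subgroup.normalizer ((Subgroup.closure {z} : Subgroup G) : Set G)) :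
    ⁅T, T⁆ ≤ Subgroup.centralizer (commutator G : Set G) ∧
    ∀ a ∈ ⁅T, T⁆, ∀ b ∈ ⁅T, T⁆, a * b = b * a := by
  have hmem : ∀ s ∈ T, ∀ z : G, (∃ x y : G, z = ⁅x, y⁆) →
      s ∈ Subgroup.normalizer ((Subgroup.closure {z} : Subgroup G) : Set G) := by
    intro s hs z hz
    rw [hT] at hs
    simp only [Subgroup.mem_iInf] at hs
    exact hs z hz
  have main : ⁅T, T⁆ ≤ Subgroup.centralizer (commutator G : Set G) := by
    rw [Subgroup.commutator_le]
    intro s hs t ht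
    rw [Subgroup.mem_centralizer_iff]
    intro g hg
    have hsub : commutator G ≤ Subgroup.centralizer {⁅s, t⁆} := by
      rw [commutator_eq_closure, Subgroup.closure_le]
      intro z hz
      obtain ⟨x, y, hxy⟩ := hz
      have hz' : ∃ x y : G, z = ⁅x, y⁆ := ⟨x, y, hxy.symm⟩
      have := commutator_commutes_of_mem_normalizer (hmem s hs z hz') (hmem t ht z hz')
      simp only [SetLike.mem_coe, Subgroup.mem_centralizer_iff, Set.mem_singleton_iff,
        forall_eq]
      exact this.symm
    have := (Subgroup.mem_centralizer_iff.mp (hsub hg)) ⁅s, t⁆ rfl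
    exact this.symm
  refine ⟨main, fun a ha b hb => ?_⟩
  have ha' : a ∈ (commutator G : Set G) :=
    Subgroup.commutator_mono le_top le_top ha
  exact Subgroup.mem_centralizer_iff.mp (main hb) a ha'
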